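/- Every digraph D whose chromatic number is at least n contains a directed path with n vertices (i.e., of length n−1). -/

import Mathlib

open Relation

/-- If a cycle exists after adding the arc `(u,v)` to `R`, then either `R` already has a
cycle or there is an `R`-path from `v` to `u`. -/
lemma ghrv_cycle_key {V : Type*} {R R' : V → V → Prop} {u v : V}
    (hsub : ∀ a b, R' a b → R a b ∨ (a = u ∧ b = v)) :
    ∀ {a b : V}, TransGen R' a b →
      TransGen R a b ∨ (ReflTransGen R a u ∧ ReflTransGen R v b) := by
  intro a b h
  induction h with
  | single hab =>
    rcases hsub _ _ hab with h | ⟨rfl, rfl⟩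
    · exact Or.inl (.single h)
    · exact Or.inr ⟨.refl, .refl⟩
  | tail hab hbc ih =>
    rcases hsub _ _ hbc with h | ⟨rfl, rfl⟩
    · rcases ih with h1 | ⟨h1, h2⟩
      · exact Or.inl (h1.tail h)
      · exact Or.inr ⟨h1, h2.tail h⟩
    · rcases ih with h1 | ⟨h1, h2⟩
      · exact Or.inr ⟨h1.to_reflTransGen, .refl⟩
      · exact Or.inr ⟨h1, .refl⟩

/-- Height of a vertex: length (in arcs) of a longest path ending at it. -/
noncomputable def ghrvHt {V : Type*} [Fintype V] (R : V → V → Prop) [DecidableRel R]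
    (wf : WellFounded R) : V → ℕ :=
  wf.fix fun x ih =>
    (Finset.univ.filter fun y => R y x).attach.sup fun y =>
      ih y.1 (Finset.mem_filter.mp y.2).2 + 1

lemma ghrvHt_eq {V : Type*} [Fintype V] (R : V → V → Prop) [DecidableRel R]
    (wf : WellFounded R) (x : V) :
    ghrvHt R wf x =
      (Finset.univ.filter fun y => R y x).attach.sup fun y => ghrvHt R wf y.1 + 1 :=
  wf.fix_eq _ x

lemma ghrvHt_lt {V : Type*} [Fintype V] {R : V → V → Prop} [DecidableRel R]
    (wf : WellFounded R) {y x : V} (hyx : R y x) : ghrvHt R wf y < ghrvHt R wf x := by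
  have hmem : y ∈ Finset.univ.filter fun z => R z x :=
    Finset.mem_filter.mpr ⟨Finset.mem_univ y, hyx⟩
  have hle : ghrvHt R wf y + 1 ≤
      (Finset.univ.filter fun z => R z x).attach.sup fun z => ghrvHt R wf z.1 + 1 :=
    Finset.le_sup (f := fun z => ghrvHt R wf z.1 + 1)
      (Finset.mem_attach _ (⟨y, hmem⟩ : {z // z ∈ Finset.univ.filter fun z => R z x}))
  have := ghrvHt_eq R wf x
  omega

lemma ghrvHt_lt_of_transGen {V : Type*} [Fintype V] {R : V → V → Prop} [DecidableRel R]
    (wf : WellFounded R) {y x : V} (h : TransGen R y x) : ghrvHt R wf y < ghrvHt R wf x := by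
  induction h with
  | single h => exact ghrvHt_lt wf h
  | tail _ h ih => exact ih.trans (ghrvHt_lt wf h)

lemma ghrv_exists_chain {V : Type*} [Fintype V] (R : V → V → Prop) [DecidableRel R]
    (wf : WellFounded R) (hacyc : ∀ v, ¬TransGen R v v) (x : V) :
    ∃ l : List V, l.length = ghrvHt R wf x + 1 ∧ l.Chain' R ∧ l.getLast? = some x ∧
      l.Nodup ∧ ∀ z ∈ l, ReflTransGen R z x := by
  suffices H : ∀ k x, ghrvHt R wf x = k → ∃ l : List V,
      l.length = ghrvHt R wf x + 1 ∧ l.Chain' R ∧ l.getLast? = some x ∧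
      l.Nodup ∧ ∀ z ∈ l, ReflTransGen R z x from H _ x rfl
  intro k
  induction k using Nat.strong_induction_on with
  | _ k ih =>
    intro x hx
    rcases k with _ | m
    · refine ⟨[x], by simp [hx], List.isChain_singleton x, by simp, by simp, ?_⟩
      intro z hz
      simp only [List.mem_singleton] at hz
      subst hz
      exact .refl
    · have hsup : ghrvHt R wf x ≤
          (Finset.univ.filter fun y => R y x).attach.sup fun y => ghrvHt R wf y.1 + 1 :=
        le_of_eq (ghrvHt_eq R wf x)
      have hpos : (⊥ : ℕ) < ghrvHt R wf x := by rw [Nat.bot_eq_zero]; omega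
      obtain ⟨b, -, hb⟩ := (Finset.le_sup_iff hpos).mp hsup
      have hRbx : R b.1 x := (Finset.mem_filter.mp b.2).2
      have hlt : ghrvHt R wf b.1 < ghrvHt R wf x := ghrvHt_lt wf hRbx
      have hbm : ghrvHt R wf b.1 = m := by omega
      obtain ⟨l', hlen, hch, hlast, hnd, hreach⟩ := ih m (by omega) b.1 hbm
      have hxl' : x ∉ l' := by
        intro hxm
        exact hacyc x (Relation.TransGen.tail' (hreach x hxm) hRbx)
      refine ⟨l' ++ [x], ?_, ?_, List.getLast?_concat, ?_, ?_⟩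
      · simp only [List.length_append, List.length_singleton, hlen, hbm, hx]
      · refine hch.append (List.isChain_singleton x) ?_
        intro p hp q hq
        rw [hlast] at hp
        simp only [Option.mem_def, Option.some.injEq, List.head?_cons] at hp hq
        subst hp; subst hq
        exact hRbx
      · refine hnd.append (List.nodup_singleton x) ?_
        intro a ha hax
        simp only [List.mem_singleton] at hax
        subst hax
        exact hxl' ha
      · intro z hz
        rcases List.mem_append.mp hz with hz | hz
        · exact (hreach z hz).tail hRbx
        · simp only [List.mem_singleton] at hz
          subst hz
          exact .refl

/-- Gallai–Hasse–Roy–Vitaver: every digraph with chromatic number at least `n`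
contains a directed path on `n` vertices. -/
theorem stmt8 {V : Type*} [Fintype V] (D : V → V → Prop) (n : ℕ)
    (h : (n : ℕ∞) ≤ (SimpleGraph.fromRel D).chromaticNumber) :
    ∃ p : Fin n → V, Function.Injective p ∧
      ∀ (i : ℕ) (hi : i + 1 < n), D (p ⟨i, Nat.lt_of_succ_lt hi⟩) (p ⟨i + 1, hi⟩) := by
  classical
  rcases Nat.eq_zero_or_pos n with rfl | hn
  · exact ⟨Fin.elim0, fun a => a.elim0, fun i hi => absurd hi (by omega)⟩
  have hV : Nonempty V := by
    by_contra hV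
    rw [not_nonempty_iff] at hV
    have hc0 : (SimpleGraph.fromRel D).Colorable 0 :=
      ⟨SimpleGraph.Coloring.mk (fun v => isEmptyElim v) (fun {a b} _ => isEmptyElim a)⟩
    have := h.trans hc0.chromaticNumber_le
    simp at this
    omega
  -- maximal acyclic subdigraph
  set A : Finset (V × V) := Finset.univ.filter (fun p => D p.1 p.2) with hA
  set Acyc : Finset (V × V) → Prop :=
    fun S => ∀ v, ¬ TransGen (fun a b => (a, b) ∈ S) v v with hAcyc
  have hemp : (∅ : Finset (V × V)) ∈ (A.powerset.filter Acyc) := by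
    refine Finset.mem_filter.mpr ⟨Finset.mem_powerset.mpr (Finset.empty_subset A), ?_⟩
    intro v hv
    cases hv with
    | single h => simp at h
    | tail _ h => simp at h
  obtain ⟨S, hS, hmax⟩ := Finset.exists_max_image (A.powerset.filter Acyc) Finset.card ⟨∅, hemp⟩
  obtain ⟨hSA, hacyc⟩ := Finset.mem_filter.mp hS
  rw [Finset.mem_powerset] at hSA
  set Rs : V → V → Prop := fun a b => (a, b) ∈ S with hRs
  have hRD : ∀ a b, Rs a b → D a b := by
    intro a b hab
    have := hSA hab
    rw [hA, Finset.mem_filter] at this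
    exact this.2
  have hacyc' : ∀ v, ¬ TransGen Rs v v := hacyc
  have hP1 : ∀ u v, D u v → Rs u v ∨ ReflTransGen Rs v u := by
    intro u v hD
    by_cases hs : Rs u v
    · exact Or.inl hs
    right
    have huvA : (u, v) ∈ A := by
      rw [hA, Finset.mem_filter]
      exact ⟨Finset.mem_univ _, hD⟩
    have hnot : ¬ Acyc (insert (u, v) S) := by
      intro hAc
      have hmem : insert (u, v) S ∈ A.powerset.filter Acyc :=
        Finset.mem_filter.mpr
          ⟨Finset.mem_powerset.mpr (Finset.insert_subset huvA hSA), hAc⟩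
      have hcard := hmax _ hmem
      rw [Finset.card_insert_of_notMem hs] at hcard
      omega
    simp only [hAcyc] at hnot
    push_neg at hnot
    obtain ⟨w, hw⟩ := hnot
    have hsub : ∀ a b : V, (a, b) ∈ insert (u, v) S → Rs a b ∨ (a = u ∧ b = v) := by
      intro a b hab
      rcases Finset.mem_insert.mp hab with hab | hab
      · right
        exact Prod.mk.injEq .. ▸ (by simpa using hab)
      · exact Or.inl hab
    rcases ghrv_cycle_key hsub hw with hcyc | ⟨hwu, hvw⟩
    · exact absurd hcyc (hacyc' w)
    · exact hvw.trans hwu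
  -- well-foundedness and height
  haveI : IsTrans V (TransGen Rs) := ⟨fun _ _ _ => TransGen.trans⟩
  haveI : IsIrrefl V (TransGen Rs) := ⟨hacyc'⟩
  have wf : WellFounded Rs :=
    Subrelation.wf (fun h => TransGen.single h)
      (Finite.wellFounded_of_trans_of_irrefl (TransGen Rs))
  set c : V → ℕ := ghrvHt Rs wf with hc
  have key : ∀ u v, D u v → u ≠ v → c u ≠ c v := by
    intro u v hD hne
    rcases hP1 u v hD with hs | hrt
    · exact (ghrvHt_lt wf hs).ne
    · rcases Relation.reflTransGen_iff_eq_or_transGen.mp hrt with heq | htg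
      · exact absurd heq hne
      · exact (ghrvHt_lt_of_transGen wf htg).ne'
  set m : ℕ := Finset.univ.sup c + 1 with hm
  have hcolorable : (SimpleGraph.fromRel D).Colorable m := by
    refine ⟨SimpleGraph.Coloring.mk
      (fun v => (⟨c v, ?_⟩ : Fin m)) ?_⟩
    · have : c v ≤ Finset.univ.sup c := Finset.le_sup (Finset.mem_univ v)
      omega
    · intro a b hab
      rw [SimpleGraph.fromRel_adj] at hab
      obtain ⟨hne, hor⟩ := hab
      intro hfe
      have hce : c a = c b := by simpa [Fin.ext_iff] using hfe
      rcases hor with hD | hD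
      · exact key a b hD hne hce
      · exact key b a hD hne.symm hce.symm
  have hnm : n ≤ m := by
    have h1 : (SimpleGraph.fromRel D).chromaticNumber ≤ (m : ℕ∞) :=
      hcolorable.chromaticNumber_le
    exact_mod_cast h.trans h1
  obtain ⟨x, -, hxsup⟩ := Finset.exists_mem_eq_sup Finset.univ Finset.univ_nonempty c
  obtain ⟨l, hlen, hchain, -, hnodup, -⟩ := ghrv_exists_chain Rs wf hacyc' x
  have hnl : n ≤ l.length := by
    have : c x = ghrvHt Rs wf x := rfl
    omega
  refine ⟨fun i => l.get (Fin.castLE hnl i), ?_, ?_⟩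
  · exact (List.nodup_iff_injective_get.mp hnodup).comp (Fin.castLE_injective hnl)
  · intro i hi
    have hstep := List.isChain_iff_getElem.mp hchain i (by omega)
    exact hRD _ _ hstep
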